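/- Let S and A be events with P(A ∩ Sᶜ) = 0, and let 𝒢 be a sub-σ-algebra of ℱ. Then E[ |P(S | 𝒢) − P(A | 𝒢)| ] = P(S ∩ Aᶜ). In particular, for any random variable M_C, E[ |P(S | σ(M_C)) − P(A | σ(M_C))| ] = P(S ∩ Aᶜ). -/

import Mathlib

open MeasureTheory ProbabilityTheory
open scoped ENNReal

/-- The sigma-algebra generated by a random variable. -/
def sigGen {Ω α : Type*} [MeasurableSpace α] (M : Ω → α) : MeasurableSpace Ω :=
  MeasurableSpace.comap M inferInstance

/-- Conditional probability of an event given a sub-sigma-algebra, as a random variable: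
`P(A | 𝒢) = E[1_A | 𝒢]`. -/
noncomputable def cprob {Ω : Type*} [MeasurableSpace Ω] (μ : Measure Ω)
    (m : MeasurableSpace Ω) (A : Set Ω) : Ω → ℝ :=
  μ[A.indicator (fun _ => (1 : ℝ)) | m]


/-- Key step of the end-to-end ECE bound: if `A` is sufficient for `S` (`P(A ∩ Sᶜ) = 0`),
then for any sub-sigma-algebra `𝒢`, `E[|P(S | 𝒢) − P(A | 𝒢)|] = P(S ∩ Aᶜ)`; in particular
this holds for `𝒢 = σ(M_C)` for any (measurable) random variable `M_C`. -/
theorem condexp_diff_integral_eq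
    {Ω : Type*} [m0 : MeasurableSpace Ω] (μ : Measure Ω) [IsProbabilityMeasure μ]
    (S A : Set Ω) (hS : MeasurableSet S) (hA : MeasurableSet A)
    (hsuff : μ (A ∩ Sᶜ) = 0) :
    (∀ m : MeasurableSpace Ω, m ≤ m0 →
      ∫ ω, |@cprob Ω m0 μ m S ω - @cprob Ω m0 μ m A ω| ∂μ = (μ (S ∩ Aᶜ)).toReal) ∧
    (∀ MC : Ω → ℝ, Measurable MC →
      ∫ ω, |cprob μ (sigGen MC) S ω - cprob μ (sigGen MC) A ω| ∂μ = (μ (S ∩ Aᶜ)).toReal) := by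
  have hSi : Integrable (S.indicator (fun _ => (1 : ℝ))) μ :=
    (integrable_const (1 : ℝ)).indicator hS
  have hAi : Integrable (A.indicator (fun _ => (1 : ℝ))) μ :=
    (integrable_const (1 : ℝ)).indicator hA
  have hkey : ∫ x, (S ∩ Aᶜ).indicator (fun _ => (1:ℝ)) x ∂μ = (μ (S ∩ Aᶜ)).toReal := by
    rw [integral_indicator (hS.inter hA.compl)]
    simp
    rfl
  have main : ∀ m : MeasurableSpace Ω, m ≤ m0 →
      ∫ ω, |@cprob Ω m0 μ m S ω - @cprob Ω m0 μ m A ω| ∂μ = (μ (S ∩ Aᶜ)).toReal := by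
    intro m hm
    haveI : SigmaFinite (μ.trim hm) := by
      have : IsFiniteMeasure (μ.trim hm) := isFiniteMeasure_trim hm
      infer_instance
    -- pointwise a.e.: indicator S - indicator A = indicator (S ∩ Aᶜ)
    have hae : (fun ω => S.indicator (fun _ => (1:ℝ)) ω - A.indicator (fun _ => (1:ℝ)) ω)
        =ᵐ[μ] (S ∩ Aᶜ).indicator (fun _ => (1:ℝ)) := by
      have hnull : ∀ᵐ ω ∂μ, ω ∉ A ∩ Sᶜ := measure_eq_zero_iff_ae_notMem.mp hsuff
      filter_upwards [hnull] with ω hω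
      by_cases hSω : ω ∈ S <;> by_cases hAω : ω ∈ A <;>
        simp [Set.indicator_apply, hSω, hAω, Set.mem_inter_iff] <;>
        exact absurd ⟨hAω, hSω⟩ hω
    -- condexp diff
    have h1 : (fun ω => @cprob Ω m0 μ m S ω - @cprob Ω m0 μ m A ω)
        =ᵐ[μ] μ[(S ∩ Aᶜ).indicator (fun _ => (1:ℝ)) | m] := by
      calc (fun ω => @cprob Ω m0 μ m S ω - @cprob Ω m0 μ m A ω)
          =ᵐ[μ] μ[(fun ω => S.indicator (fun _ => (1:ℝ)) ω - A.indicator (fun _ => (1:ℝ)) ω) | m] :=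
            (condExp_sub hSi hAi m).symm
        _ =ᵐ[μ] μ[(S ∩ Aᶜ).indicator (fun _ => (1:ℝ)) | m] := condExp_congr_ae hae
    have hnn : 0 ≤ᵐ[μ] μ[(S ∩ Aᶜ).indicator (fun _ => (1:ℝ)) | m] :=
      condExp_nonneg (by
        filter_upwards with ω
        exact Set.indicator_nonneg (fun _ _ => zero_le_one) ω)
    have habs : (fun ω => |@cprob Ω m0 μ m S ω - @cprob Ω m0 μ m A ω|)
        =ᵐ[μ] μ[(S ∩ Aᶜ).indicator (fun _ => (1:ℝ)) | m] := by
      filter_upwards [h1, hnn] with ω h1ω hnnω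
      rw [abs_of_nonneg (h1ω ▸ hnnω : (0:ℝ) ≤ _)]
      exact h1ω
    rw [integral_congr_ae habs, integral_condExp hm, hkey]
  refine ⟨main, fun MC hMC => main _ ?_⟩
  intro s hs
  obtain ⟨t, ht, rfl⟩ := hs
  exact hMC ht
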